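/- Let 0 ≤ e < 1 and let ω ∈ ℂ with |ω| = 1 and ω ≠ 1. For every continuously differentiable function x: [0,2π] → ℂ with x(2π) = ω·x(0) that is not identically zero, the integral ∫₀^{2π} (|x'(t)|² − (e cos t)/(1 + e cos t)·|x(t)|²) dt is strictly positive. -/

import Mathlib

open MeasureTheory Set intervalIntegral

/-- For `0 ≤ e < 1`, `ω ∈ 𝕌 \ {1}`, and `x : [0,2π] → ℂ` a `C¹` function with
`x(2π) = ω x(0)` which is not identically zero, the quadratic form
`∫₀^{2π} (|x'|² − (e cos t)/(1+e cos t)|x|²) dt` is strictly positive. -/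
theorem euler_kepler_form_pos (e : ℝ) (he0 : 0 ≤ e) (he1 : e < 1)
    (ω : ℂ) (hω : ‖ω‖ = 1) (hω1 : ω ≠ 1)
    (x : ℝ → ℂ) (hx : ContDiffOn ℝ 1 x (Set.Icc 0 (2 * Real.pi)))
    (hbc : x (2 * Real.pi) = ω * x 0)
    (hne : ∃ t ∈ Set.Icc (0 : ℝ) (2 * Real.pi), x t ≠ 0) :
    0 < ∫ t in (0 : ℝ)..(2 * Real.pi),
        (‖derivWithin x (Set.Icc 0 (2 * Real.pi)) t‖ ^ 2
          - e * Real.cos t / (1 + e * Real.cos t) * ‖x t‖ ^ 2) := by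
  have hπ : (0:ℝ) < 2 * Real.pi := by positivity
  set I : Set ℝ := Set.Icc 0 (2 * Real.pi) with hI
  have hφ : ∀ t : ℝ, 0 < 1 + e * Real.cos t := by
    intro t
    nlinarith [Real.neg_one_le_cos t, Real.cos_le_one t]
  have hφ' : ∀ t : ℝ, (1 + e * Real.cos t) ≠ 0 := fun t => (hφ t).ne'
  set x' : ℝ → ℂ := derivWithin x I with hx'def
  have hud : UniqueDiffOn ℝ I := uniqueDiffOn_Icc hπ
  have hdx : ∀ t ∈ I, HasDerivWithinAt x (x' t) I t := fun t ht =>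
    ((hx.differentiableOn one_ne_zero) t ht).hasDerivWithinAt
  have hcx : ContinuousOn x I := hx.continuousOn
  have hcx' : ContinuousOn x' I := hx.continuousOn_derivWithin hud le_rfl
  set a : ℝ → ℝ := fun t => -(e * Real.sin t) / (1 + e * Real.cos t) with ha
  have hca : Continuous a :=
    ((continuous_const.mul Real.continuous_sin).neg).div
      (continuous_const.add (continuous_const.mul Real.continuous_cos)) hφ'
  set y : ℝ → ℂ := fun t => x' t - (a t : ℂ) * x t with hy
  have hcy : ContinuousOn y I :=
    hcx'.sub (((Complex.continuous_ofReal.comp hca).continuousOn).mul hcx)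
  set F : ℝ → ℝ := fun t =>
    ‖x' t‖ ^ 2 - e * Real.cos t / (1 + e * Real.cos t) * ‖x t‖ ^ 2 with hF
  have hcF : ContinuousOn F I := by
    apply ContinuousOn.sub
    · exact (hcx'.norm).pow 2
    · exact (((continuous_const.mul Real.continuous_cos).div
        (continuous_const.add (continuous_const.mul Real.continuous_cos))
        hφ').continuousOn).mul ((hcx.norm).pow 2)
  have huIcc : Set.uIcc (0:ℝ) (2*Real.pi) = I := Set.uIcc_of_le hπ.le
  have hintF : IntervalIntegrable F volume 0 (2*Real.pi) :=
    (huIcc ▸ hcF).intervalIntegrable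
  have hintY : IntervalIntegrable (fun t => ‖y t‖^2) volume 0 (2*Real.pi) :=
    (huIcc ▸ ((hcy.norm).pow 2)).intervalIntegrable
  -- the key pointwise identity as a derivative statement
  have hFY : ∀ t ∈ Set.Ioo (0:ℝ) (2*Real.pi),
      HasDerivAt (fun t => a t * ‖x t‖^2) (F t - ‖y t‖^2) t := by
    intro t ht
    have htI : t ∈ I := Set.Ioo_subset_Icc_self ht
    have hxt : HasDerivAt x (x' t) t :=
      (hdx t htI).hasDerivAt (Icc_mem_nhds ht.1 ht.2)
    have hre : HasDerivAt (fun s => (x s).re) ((x' t).re) t :=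
      Complex.reCLM.hasFDerivAt.comp_hasDerivAt t hxt
    have him : HasDerivAt (fun s => (x s).im) ((x' t).im) t :=
      Complex.imCLM.hasFDerivAt.comp_hasDerivAt t hxt
    have hN : HasDerivAt (fun s => (x s).re^2 + (x s).im^2)
        (2*(x t).re*(x' t).re + 2*(x t).im*(x' t).im) t := by
      have h1 := (hre.pow 2).add (him.pow 2)
      refine h1.congr_deriv ?_; push_cast; ring
    have hA : HasDerivAt a
        ((-(e*Real.cos t)*(1+e*Real.cos t) - (-(e*Real.sin t))*(e * -Real.sin t))
          / (1+e*Real.cos t)^2) t := by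
      exact (((Real.hasDerivAt_sin t).const_mul e).neg).div
        (((Real.hasDerivAt_cos t).const_mul e).const_add 1) (hφ' t)
    have hnormx : (fun s => a s * ‖x s‖^2) = fun s => a s * ((x s).re^2 + (x s).im^2) := by
      funext s
      rw [Complex.sq_norm, Complex.normSq_apply]
      ring
    rw [hnormx]
    have := hA.mul hN
    refine this.congr_deriv ?_
    have h2 : ‖x t‖^2 = (x t).re^2 + (x t).im^2 := by
      rw [Complex.sq_norm, Complex.normSq_apply]; ring
    have h3 : ‖y t‖^2 = ((x' t).re - a t * (x t).re)^2 + ((x' t).im - a t * (x t).im)^2 := by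
      rw [Complex.sq_norm, Complex.normSq_apply]
      simp only [hy, Complex.sub_re, Complex.sub_im, Complex.mul_re, Complex.mul_im,
        Complex.ofReal_re, Complex.ofReal_im]
      ring
    have h4 : ‖x' t‖^2 = (x' t).re^2 + (x' t).im^2 := by
      rw [Complex.sq_norm, Complex.normSq_apply]; ring
    rw [hF]
    simp only [h2, h3, h4, ha]
    have hne0 := hφ' t
    field_simp
    ring
  have hGcont : ContinuousOn (fun t => a t * ‖x t‖^2) I :=
    (hca.continuousOn).mul ((hcx.norm).pow 2)
  have hFTC : ∫ t in (0:ℝ)..(2*Real.pi), (F t - ‖y t‖^2)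
      = (fun t => a t * ‖x t‖^2) (2*Real.pi) - (fun t => a t * ‖x t‖^2) 0 :=
    integral_eq_sub_of_hasDerivAt_of_le hπ.le hGcont hFY (hintF.sub hintY)
  have ha2π : a (2*Real.pi) = 0 := by simp [ha, Real.sin_two_pi]
  have ha0 : a 0 = 0 := by simp [ha]
  have hEq : ∫ t in (0:ℝ)..(2*Real.pi), F t = ∫ t in (0:ℝ)..(2*Real.pi), ‖y t‖^2 := by
    have := hFTC
    rw [intervalIntegral.integral_sub hintF hintY] at this
    simp only [ha2π, ha0, zero_mul, sub_zero, sub_self] at this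
    linarith [this]
  have hnn : 0 ≤ ∫ t in (0:ℝ)..(2*Real.pi), ‖y t‖^2 :=
    intervalIntegral.integral_nonneg hπ.le (fun t _ => by positivity)
  rcases lt_or_eq_of_le hnn with hpos | hzero
  · calc (0:ℝ) < _ := hpos
      _ = _ := hEq.symm
  · -- contradiction: y ≡ 0 forces x = c (1 + e cos t), then c = 0
    exfalso
    have hae : (fun t => ‖y t‖^2) =ᵐ[volume.restrict (Set.Ioc 0 (2*Real.pi))] 0 :=
      (integral_eq_zero_iff_of_le_of_nonneg_ae hπ.le
        (Filter.Eventually.of_forall fun t => by positivity) hintY).mp hzero.symm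
    have hae' : (fun t => ‖y t‖^2) =ᵐ[volume.restrict I] 0 := by
      rwa [← Measure.restrict_congr_set Ioc_ae_eq_Icc]
    have hyzero : ∀ t ∈ I, y t = 0 := by
      intro t ht
      have hEqOn : Set.EqOn (fun t => ‖y t‖^2) 0 I := by
        apply Measure.eqOn_of_ae_eq hae' ((hcy.norm).pow 2) continuousOn_const
        rw [hI, interior_Icc, closure_Ioo hπ.ne]
      have h5 := hEqOn ht
      simp only [Pi.zero_apply] at h5
      have h6 : ‖y t‖ = 0 := by nlinarith [norm_nonneg (y t)]
      exact norm_eq_zero.mp h6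
    -- x t = c * (1 + e cos t)
    set h : ℝ → ℂ := fun t => x t / ((1 + e * Real.cos t : ℝ) : ℂ) with hh
    have hφc : ∀ t : ℝ, ((1 + e * Real.cos t : ℝ) : ℂ) ≠ 0 := fun t => by
      exact_mod_cast Complex.ofReal_ne_zero.mpr (hφ' t)
    have hhd : ∀ t ∈ I, HasDerivWithinAt h 0 I t := by
      intro t ht
      have hden : HasDerivAt (fun s => ((1 + e * Real.cos s : ℝ) : ℂ))
          ((e * -Real.sin t : ℝ) : ℂ) t :=
        Complex.ofRealCLM.hasFDerivAt.comp_hasDerivAt t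
          (((Real.hasDerivAt_cos t).const_mul e).const_add 1)
      have hx't : x' t = (a t : ℂ) * x t := by
        have := hyzero t ht
        rw [hy] at this
        linear_combination this
      have := (hdx t ht).div (hden.hasDerivWithinAt) (hφc t)
      have hc : (1 + (e:ℂ) * Complex.cos (t:ℂ)) ≠ 0 := by
        rw [show (1 + (e:ℂ) * Complex.cos (t:ℂ)) = ((1 + e * Real.cos t : ℝ) : ℂ) by
          push_cast; ring]
        exact hφc t
      refine this.congr_deriv ?_
      rw [hx't, ha]
      push_cast
      field_simp
      ring
    have hdiff : DifferentiableOn ℝ h I := fun t ht => ((hhd t ht).differentiableWithinAt)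
    have hconst : ∀ t ∈ I, h t = h 0 := by
      apply constant_of_derivWithin_zero hdiff
      intro t ht
      exact ((hhd t (Set.Ico_subset_Icc_self ht)).derivWithin (hud t (Set.Ico_subset_Icc_self ht)))
    have hxt : ∀ t ∈ I, x t = h 0 * ((1 + e * Real.cos t : ℝ) : ℂ) := by
      intro t ht
      have h7 : x t / ((1 + e * Real.cos t : ℝ) : ℂ) = h 0 := hconst t ht
      exact (div_eq_iff (hφc t)).mp h7
    have h0I : (0:ℝ) ∈ I := Set.left_mem_Icc.mpr hπ.le
    have h2πI : (2*Real.pi) ∈ I := Set.right_mem_Icc.mpr hπ.le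
    have hx0 : x 0 = h 0 * ((1 + e : ℝ) : ℂ) := by
      have := hxt 0 h0I; simpa using this
    have hx2π : x (2*Real.pi) = h 0 * ((1 + e : ℝ) : ℂ) := by
      have := hxt (2*Real.pi) h2πI; simpa [Real.cos_two_pi] using this
    have h1e : ((1 + e : ℝ) : ℂ) ≠ 0 := by
      exact_mod_cast Complex.ofReal_ne_zero.mpr (by linarith)
    have hc0 : h 0 = 0 := by
      rw [hx2π, hx0] at hbc
      have : (1 - ω) * h 0 * ((1+e:ℝ):ℂ) = 0 := by linear_combination hbc
      rcases mul_eq_zero.mp this with h' | h'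
      · rcases mul_eq_zero.mp h' with h'' | h''
        · exact absurd (by linear_combination -h'') hω1
        · exact h''
      · exact absurd h' h1e
    obtain ⟨t, ht, hxtne⟩ := hne
    exact hxtne (by rw [hxt t ht, hc0, zero_mul])
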